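/- For every ν > 0 and every bounded set B ⊆ ℝⁿ there exists T = T(ν, B) > 0 such that for every t₀ ≥ 0 and every solution x : [t₀, ∞) → ℝⁿ of the masked average-consensus system with x(t₀) = x₀ ∈ B, one has ‖x(t) − (𝟙ᵀx₀/n)·𝟙‖ < ν for all t > t₀ + T. That is, the average-consensus point is attractive uniformly in the initial time t₀ and uniformly over initial conditions in bounded sets. -/

import Mathlib

open Set Filter Topology Matrix

/-- Right-hand side of the masked average-consensus system
`ẋ = -L (I + Φ e^{-Σ t}) (x + e^{-Δ t} γ)`, written componentwise through the
diagonal matrices `Φ = diag φ`, `Σ = diag σ`, `Δ = diag δ`. -/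
noncomputable def maskedConsensusRHS {n : ℕ} (L : Matrix (Fin n) (Fin n) ℝ)
    (φ σ δ γ : Fin n → ℝ) (t : ℝ) (x : Fin n → ℝ) : Fin n → ℝ :=
  -(L.mulVec (fun i => (1 + φ i * Real.exp (-σ i * t)) * (x i + Real.exp (-δ i * t) * γ i)))

lemma cmp_lemma {K eps a b : ℝ} (hK : K ≠ 0) {f f' : ℝ → ℝ} (hab : a ≤ b)
    (hf : ∀ t ∈ Set.Icc a b, HasDerivAt f (f' t) t)
    (hle : ∀ t ∈ Set.Icc a b, f' t ≤ K * f t + eps) :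
    f b ≤ (f a + eps / K) * Real.exp (K * (b - a)) - eps / K := by
  set g : ℝ → ℝ := fun t => (f t + eps / K) * Real.exp (-K * (t - a)) with hg
  have hexp : ∀ t : ℝ, HasDerivAt (fun s : ℝ => Real.exp (-K * (s - a)))
      (Real.exp (-K * (t - a)) * (-K)) t := by
    intro t
    have h1 : HasDerivAt (fun s : ℝ => -K * (s - a)) (-K) t := by
      simpa using ((hasDerivAt_id t).sub_const a).const_mul (-K)
    simpa using h1.exp
  have hgd : ∀ t ∈ Set.Icc a b, HasDerivAt g
      (f' t * Real.exp (-K * (t - a)) + (f t + eps / K) * (Real.exp (-K * (t - a)) * (-K))) t := by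
    intro t ht
    exact ((hf t ht).add_const _).mul (hexp t)
  have hmono : AntitoneOn g (Set.Icc a b) := by
    apply antitoneOn_of_deriv_nonpos (convex_Icc a b)
    · exact fun t ht => ((hgd t ht).continuousAt).continuousWithinAt
    · intro t ht
      rw [interior_Icc] at ht
      exact ((hgd t (Ioo_subset_Icc_self ht)).differentiableAt).differentiableWithinAt
    · intro t ht
      rw [interior_Icc] at ht
      rw [(hgd t (Ioo_subset_Icc_self ht)).deriv]
      have hE : 0 < Real.exp (-K * (t - a)) := Real.exp_pos _
      have h2 := hle t (Ioo_subset_Icc_self ht)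
      have hKf : eps / K * K = eps := div_mul_cancel₀ eps hK
      nlinarith [hE, h2]
  have h2 : g b ≤ g a := hmono (Set.left_mem_Icc.2 hab) (Set.right_mem_Icc.2 hab) hab
  have hga : g a = f a + eps / K := by simp [hg]
  rw [hga] at h2
  have hE : 0 < Real.exp (K * (b - a)) := Real.exp_pos _
  have h3 := mul_le_mul_of_nonneg_right h2 hE.le
  have h4 : Real.exp (-K * (b - a)) * Real.exp (K * (b - a)) = 1 := by
    rw [← Real.exp_add]; ring_nf; exact Real.exp_zero
  have h5 : (f b + eps / K) * (Real.exp (-K * (b - a)) * Real.exp (K * (b - a)))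
      ≤ (f a + eps / K) * Real.exp (K * (b - a)) := by
    rw [← mul_assoc]; exact h3
  rw [h4, mul_one] at h5
  linarith

lemma exp_small {μ : ℝ} (hμ : 0 < μ) (c ε : ℝ) (hε : 0 < ε) :
    ∃ T : ℝ, 0 < T ∧ ∀ t : ℝ, T ≤ t → c * Real.exp (-μ * t) ≤ ε := by
  rcases le_or_gt c 0 with hc | hc
  · exact ⟨1, one_pos, fun t _ =>
      le_trans (mul_nonpos_of_nonpos_of_nonneg hc (Real.exp_pos _).le) hε.le⟩
  · refine ⟨max 1 (Real.log (c / ε) / μ), lt_of_lt_of_le one_pos (le_max_left _ _),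
      fun t ht => ?_⟩
    have h1 : Real.log (c / ε) ≤ μ * t := by
      have h0 := le_trans (le_max_right 1 (Real.log (c / ε) / μ)) ht
      calc Real.log (c / ε) = μ * (Real.log (c / ε) / μ) := by field_simp
        _ ≤ μ * t := by nlinarith
    have h2 : c / ε ≤ Real.exp (μ * t) := by
      calc c / ε = Real.exp (Real.log (c / ε)) := (Real.exp_log (by positivity)).symm
        _ ≤ Real.exp (μ * t) := Real.exp_le_exp.2 h1
    have h4 : c ≤ ε * Real.exp (μ * t) := by
      rw [div_le_iff₀ hε] at h2; linarith
    have h5 : Real.exp (μ * t) * Real.exp (-μ * t) = 1 := by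
      rw [← Real.exp_add]; norm_num
    calc c * Real.exp (-μ * t) ≤ ε * Real.exp (μ * t) * Real.exp (-μ * t) :=
          mul_le_mul_of_nonneg_right h4 (Real.exp_pos _).le
      _ = ε := by rw [mul_assoc, h5, mul_one]

lemma cross_bound {n : ℕ} (L : Matrix (Fin n) (Fin n) ℝ) {ML Mm E : ℝ}
    (hML : ∀ i j, |L i j| ≤ ML) (e m : Fin n → ℝ)
    (hE : ∀ i, |e i| ≤ E) (hm : ∀ j, |m j| ≤ Mm)
    (hMLnn : 0 ≤ ML) (hEnn : 0 ≤ E) :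
    |dotProduct e (L.mulVec m)| ≤ (n : ℝ) ^ 2 * ML * E * Mm := by
  have hLm : ∀ i, |(L.mulVec m) i| ≤ (n : ℝ) * ML * Mm := by
    intro i
    calc |(L.mulVec m) i| = |∑ j, L i j * m j| := rfl
      _ ≤ ∑ j, |L i j * m j| := Finset.abs_sum_le_sum_abs _ _
      _ ≤ ∑ _j : Fin n, ML * Mm := by
          apply Finset.sum_le_sum
          intro j _
          rw [abs_mul]
          exact mul_le_mul (hML i j) (hm j) (abs_nonneg _) hMLnn
      _ = (n : ℝ) * ML * Mm := by
          rw [Finset.sum_const, Finset.card_univ, Fintype.card_fin, nsmul_eq_mul]; ring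
  calc |dotProduct e (L.mulVec m)| = |∑ i, e i * (L.mulVec m) i| := rfl
    _ ≤ ∑ i, |e i * (L.mulVec m) i| := Finset.abs_sum_le_sum_abs _ _
    _ ≤ ∑ _i : Fin n, E * ((n : ℝ) * ML * Mm) := by
        apply Finset.sum_le_sum
        intro i _
        rw [abs_mul]
        exact mul_le_mul (hE i) (hLm i) (abs_nonneg _) hEnn
    _ = (n : ℝ) ^ 2 * ML * E * Mm := by
        rw [Finset.sum_const, Finset.card_univ, Fintype.card_fin, nsmul_eq_mul]; ring

lemma spectral_gap (n : ℕ) (hn : 2 ≤ n) (M : Matrix (Fin n) (Fin n) ℝ)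
    (hMpos : ∀ w : Fin n → ℝ, w ≠ 0 → (∑ i, w i) = 0 →
      0 < dotProduct w (M.mulVec w)) :
    ∃ lam : ℝ, 0 < lam ∧ ∀ w : Fin n → ℝ, (∑ i, w i) = 0 →
      lam * (∑ i, (w i) ^ 2) ≤ dotProduct w (M.mulVec w) := by
  classical
  have hqe : ∀ w : Fin n → ℝ, dotProduct w (M.mulVec w)
      = ∑ i, w i * ∑ j, M i j * w j := by
    intro w; rfl
  set q : (Fin n → ℝ) → ℝ := fun w => ∑ i, w i * ∑ j, M i j * w j with hq
  have hqc : Continuous q := by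
    apply continuous_finset_sum
    intro i _
    exact (continuous_apply i).mul (continuous_finset_sum _ fun j _ =>
      continuous_const.mul (continuous_apply j))
  set S : Set (Fin n → ℝ) := {w | (∑ i, (w i) ^ 2) = 1 ∧ (∑ i, w i) = 0} with hS
  have hclosed : IsClosed S := by
    apply IsClosed.inter
    · exact isClosed_eq (by continuity) continuous_const
    · exact isClosed_eq (by continuity) continuous_const
  have hbdd : Bornology.IsBounded S := by
    apply (Metric.isBounded_iff_subset_closedBall 0).2
    refine ⟨1, fun w hw => ?_⟩
    simp only [Metric.mem_closedBall, dist_zero_right]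
    apply pi_norm_le_iff_of_nonneg zero_le_one |>.2
    intro i
    have h1 : (w i) ^ 2 ≤ 1 := by
      have := Finset.single_le_sum (fun j _ => sq_nonneg (w j)) (Finset.mem_univ i)
      rw [hw.1] at this; exact this
    rw [Real.norm_eq_abs, abs_le]
    constructor <;> nlinarith [sq_nonneg (w i - 1), sq_nonneg (w i + 1)]
  have hcpt : IsCompact S := Metric.isCompact_iff_isClosed_bounded.2 ⟨hclosed, hbdd⟩
  have hne : (⟨0, by omega⟩ : Fin n) ≠ (⟨1, by omega⟩ : Fin n) := by
    intro h; simpa using congrArg Fin.val h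
  set a : ℝ := Real.sqrt 2⁻¹ with ha
  have ha2 : a ^ 2 = 2⁻¹ := Real.sq_sqrt (by norm_num)
  set w0 : Fin n → ℝ := fun i =>
    (if i = (⟨0, by omega⟩ : Fin n) then a else 0) +
    (if i = (⟨1, by omega⟩ : Fin n) then -a else 0) with hw0
  have hw0sum : (∑ i, w0 i) = 0 := by
    rw [hw0]
    rw [Finset.sum_add_distrib, Finset.sum_ite_eq' Finset.univ, Finset.sum_ite_eq' Finset.univ]
    simp
  have hw0sq : (∑ i, (w0 i) ^ 2) = 1 := by
    have h : ∀ i, (w0 i) ^ 2 = (if i = (⟨0, by omega⟩ : Fin n) then a ^ 2 else 0) +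
        (if i = (⟨1, by omega⟩ : Fin n) then a ^ 2 else 0) := by
      intro i
      by_cases h0 : i = (⟨0, by omega⟩ : Fin n) <;>
        by_cases h1 : i = (⟨1, by omega⟩ : Fin n) <;>
        simp [hw0, h0, h1] <;> first | (exact absurd (h0 ▸ h1) hne) | ring
    rw [Finset.sum_congr rfl (fun i _ => h i), Finset.sum_add_distrib,
      Finset.sum_ite_eq' Finset.univ, Finset.sum_ite_eq' Finset.univ]
    simp [ha2]; norm_num
  have hSne : S.Nonempty := ⟨w0, ⟨hw0sq, hw0sum⟩⟩
  obtain ⟨wm, hwm, hmin⟩ := hcpt.exists_isMinOn hSne hqc.continuousOn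
  set lam : ℝ := q wm with hlam
  have hwmne : wm ≠ 0 := by
    intro h
    have h2 := hwm.1
    rw [h] at h2; simp at h2
  have hlampos : 0 < lam := by
    rw [hlam, hq]
    have := hMpos wm hwmne hwm.2
    rwa [hqe] at this
  refine ⟨lam, hlampos, ?_⟩
  intro w hwsum
  by_cases hw0' : w = 0
  · subst hw0'; simp [hqe]
  · set r : ℝ := Real.sqrt (∑ i, (w i) ^ 2) with hr
    have hsumpos : 0 < ∑ i, (w i) ^ 2 := by
      have hex : ∃ i, w i ≠ 0 := by
        by_contra h; push_neg at h; exact hw0' (funext h)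
      obtain ⟨i, hi⟩ := hex
      have h1 : 0 < (w i) ^ 2 := by positivity
      exact lt_of_lt_of_le h1 (Finset.single_le_sum (fun j _ => sq_nonneg (w j)) (Finset.mem_univ i))
    have hrpos : 0 < r := Real.sqrt_pos.2 hsumpos
    have hr2 : r ^ 2 = ∑ i, (w i) ^ 2 := Real.sq_sqrt hsumpos.le
    set u : Fin n → ℝ := fun i => r⁻¹ * w i with hu
    have huS : u ∈ S := by
      constructor
      · rw [hu]
        simp only [mul_pow]
        rw [← Finset.mul_sum, ← hr2]
        field_simp
      · rw [hu, ← Finset.mul_sum, hwsum, mul_zero]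
    have hqu : lam ≤ q u := hmin huS
    have hscale : q u = r⁻¹ ^ 2 * q w := by
      rw [hq]
      simp only [hu]
      rw [Finset.mul_sum]
      apply Finset.sum_congr rfl
      intro i _
      rw [Finset.mul_sum, Finset.mul_sum]
      rw [Finset.mul_sum]
      ring_nf
    rw [hscale] at hqu
    rw [hqe]
    have hfin : lam * r ^ 2 ≤ q w := by
      have h2 := mul_le_mul_of_nonneg_right hqu (sq_nonneg r)
      calc lam * r ^ 2 ≤ r⁻¹ ^ 2 * q w * r ^ 2 := h2
        _ = q w := by field_simp
    rw [hr2] at hfin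
    exact hfin

lemma sq_sub_le {a b R : ℝ} (h1 : |a| ≤ R) (h2 : |b| ≤ R) : (a - b)^2 ≤ 4*R^2 := by
  have h1' := abs_le.1 h1
  have h2' := abs_le.1 h2
  nlinarith [h1'.1, h1'.2, h2'.1, h2'.2]

lemma abs_lt_of_sq_lt {a ν : ℝ} (h : a^2 < ν^2) (hν : 0 < ν) : |a| < ν := by
  nlinarith [abs_nonneg a, sq_abs a]

set_option maxHeartbeats 1000000 in
/-- **Uniform attractivity of the average-consensus point (Theorem 1).**
For every `ν > 0` and every bounded set `B ⊆ ℝⁿ` there is `T = T(ν, B) > 0` such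
that for every initial time `t₀ ≥ 0` and every solution `x` of the masked system
`ẋ = -L (I + Φ e^{-Σ t}) (x + e^{-Δ t} γ)` with `x(t₀) = x₀ ∈ B`, one has
`‖x(t) − (𝟙ᵀx₀/n) 𝟙‖ < ν` for all `t > t₀ + T`. Here `L` is an irreducible
weight-balanced Laplacian (`L𝟙 = Lᵀ𝟙 = 0`, `wᵀ(L+Lᵀ)w > 0` for nonzero `w ⊥ 𝟙`)
and `φᵢ, σᵢ, δᵢ > 0`. -/
theorem masked_consensus_uniform_attractor
    (n : ℕ) (hn : 2 ≤ n) (L : Matrix (Fin n) (Fin n) ℝ) (φ σ δ γ : Fin n → ℝ)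
    (hL1 : L.mulVec (fun _ => (1 : ℝ)) = 0)
    (hLT1 : L.transpose.mulVec (fun _ => (1 : ℝ)) = 0)
    (hLpos : ∀ w : Fin n → ℝ, w ≠ 0 → (∑ i, w i) = 0 →
      0 < dotProduct w ((L + L.transpose).mulVec w))
    (hφ : ∀ i, 0 < φ i) (hσ : ∀ i, 0 < σ i) (hδ : ∀ i, 0 < δ i) :
    ∀ ν : ℝ, 0 < ν → ∀ B : Set (Fin n → ℝ), Bornology.IsBounded B →
      ∃ T : ℝ, 0 < T ∧
        ∀ t₀ : ℝ, 0 ≤ t₀ → ∀ x₀ ∈ B, ∀ x : ℝ → Fin n → ℝ, x t₀ = x₀ →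
          (∀ t ∈ Set.Ici t₀,
            HasDerivAt x (maskedConsensusRHS L φ σ δ γ t (x t)) t) →
          ∀ t : ℝ, t₀ + T < t →
            ‖x t - (fun _ => (∑ i, x₀ i) / n)‖ < ν := by
  classical
  intro ν hν B hB
  have hnpos : (0:ℝ) < (n:ℝ) := by
    have h : (0:ℕ) < n := by omega
    exact_mod_cast h
  obtain ⟨lam, hlam, hspec⟩ := spectral_gap n hn (L + L.transpose) hLpos
  obtain ⟨r, hr⟩ := (Metric.isBounded_iff_subset_closedBall 0).1 hB
  set R : ℝ := max r 1 with hR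
  have hRpos : (0:ℝ) < R := lt_of_lt_of_le one_pos (le_max_right _ _)
  have hRB : ∀ y ∈ B, ‖y‖ ≤ R := fun y hy => by
    have h := hr hy
    simp only [Metric.mem_closedBall, dist_zero_right] at h
    exact h.trans (le_max_left _ _)
  set ML : ℝ := 1 + ∑ i, ∑ j, |L i j| with hML
  have hMLpos : 0 < ML := by
    have h : (0:ℝ) ≤ ∑ i, ∑ j, |L i j| :=
      Finset.sum_nonneg fun i _ => Finset.sum_nonneg fun j _ => abs_nonneg _
    rw [hML]; linarith
  have hMLb : ∀ i j, |L i j| ≤ ML := by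
    intro i j
    have h1 : |L i j| ≤ ∑ j', |L i j'| :=
      Finset.single_le_sum (f := fun j' => |L i j'|) (fun j' _ => abs_nonneg _) (Finset.mem_univ j)
    have h2 : (∑ j', |L i j'|) ≤ ∑ i', ∑ j', |L i' j'| :=
      Finset.single_le_sum (f := fun i' => ∑ j', |L i' j'|)
        (fun i' _ => Finset.sum_nonneg fun j' _ => abs_nonneg _) (Finset.mem_univ i)
    rw [hML]; linarith
  set Φm : ℝ := 1 + ∑ i, φ i with hΦm
  have hΦmpos : 0 < Φm := by
    have h : (0:ℝ) ≤ ∑ i, φ i := Finset.sum_nonneg fun i _ => (hφ i).le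
    rw [hΦm]; linarith
  have hΦmb : ∀ i, φ i ≤ Φm := fun i => by
    have h := Finset.single_le_sum (fun j _ => (hφ j).le) (Finset.mem_univ i)
    rw [hΦm]; linarith
  set Γ : ℝ := ∑ i, |γ i| with hΓ
  have hΓnn : 0 ≤ Γ := Finset.sum_nonneg fun i _ => abs_nonneg _
  have hΓb : ∀ i, |γ i| ≤ Γ := by
    intro i
    rw [hΓ]
    exact Finset.single_le_sum (f := fun j => |γ j|) (fun j _ => abs_nonneg _) (Finset.mem_univ i)
  have hFne : (Finset.univ : Finset (Fin n)).Nonempty := ⟨⟨0, by omega⟩, Finset.mem_univ _⟩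
  set μ : ℝ := Finset.inf' Finset.univ hFne (fun i => min (σ i) (δ i)) with hμ
  have hμpos : 0 < μ := by
    rw [hμ, Finset.lt_inf'_iff]
    exact fun i _ => lt_min (hσ i) (hδ i)
  have hμσ : ∀ i, μ ≤ σ i := fun i =>
    le_trans (Finset.inf'_le _ (Finset.mem_univ i)) (min_le_left _ _)
  have hμδ : ∀ i, μ ≤ δ i := fun i =>
    le_trans (Finset.inf'_le _ (Finset.mem_univ i)) (min_le_right _ _)
  set c₂ : ℝ := (n:ℝ)^2 * ML * (Φm * (R + Γ) + Γ) with hc₂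
  have hc₂pos : 0 < c₂ := by
    rw [hc₂]
    apply mul_pos (mul_pos (by positivity) hMLpos)
    have h := mul_pos hΦmpos (show (0:ℝ) < R + Γ by linarith)
    linarith
  set c₁ : ℝ := 2 * (n:ℝ)^2 * ML * Φm + c₂ with hc₁
  have hc₁pos : 0 < c₁ := by
    rw [hc₁]
    have h : 0 < 2 * (n:ℝ)^2 * ML * Φm := by positivity
    linarith
  obtain ⟨T₁a, hT₁apos, hT₁a'⟩ := exp_small hμpos c₁ (lam/2) (by linarith)
  obtain ⟨T₁b, hT₁bpos, hT₁b'⟩ := exp_small hμpos (2*c₂/lam) (ν^2/4) (by positivity)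
  set T₁ : ℝ := max T₁a T₁b with hT₁
  have hT₁pos : 0 < T₁ := lt_of_lt_of_le hT₁apos (le_max_left _ _)
  have hA : c₁ * Real.exp (-μ * T₁) ≤ lam/2 := hT₁a' T₁ (le_max_left _ _)
  have hBc : 2*c₂/lam * Real.exp (-μ * T₁) ≤ ν^2/4 := hT₁b' T₁ (le_max_right _ _)
  set V1m : ℝ := (4*(n:ℝ)*R^2 + c₂/c₁) * Real.exp (c₁ * T₁) with hV1m
  have hV1mpos : 0 < V1m := by
    rw [hV1m]; positivity
  obtain ⟨T₂, hT₂pos, hT₂'⟩ := exp_small (show (0:ℝ) < lam/2 by linarith) V1m (ν^2/4)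
    (by positivity)
  clear_value R ML Φm Γ μ c₂ c₁ T₁ V1m
  refine ⟨T₁ + T₂, by linarith, ?_⟩
  intro t₀ ht₀ x₀ hx₀B x hx0 hode t htT
  set η : ℝ := (∑ i, x₀ i) / (n:ℝ) with hη
  have hx₀R : ∀ i, |x₀ i| ≤ R := fun i => by
    have h1 : ‖x₀ i‖ ≤ ‖x₀‖ := norm_le_pi_norm x₀ i
    rw [Real.norm_eq_abs] at h1
    exact h1.trans (hRB x₀ hx₀B)
  have hηR : |η| ≤ R := by
    rw [hη, abs_div, abs_of_pos hnpos, div_le_iff₀ hnpos]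
    calc |∑ i, x₀ i| ≤ ∑ i, |x₀ i| := Finset.abs_sum_le_sum_abs _ _
      _ ≤ ∑ _i : Fin n, R := Finset.sum_le_sum fun i _ => hx₀R i
      _ = R * (n:ℝ) := by
          rw [Finset.sum_const, Finset.card_univ, Fintype.card_fin, nsmul_eq_mul]; ring
  have hnη : (n:ℝ) * η = ∑ i, x₀ i := by
    rw [hη]; field_simp
  clear_value η
  -- conservation of the average
  have hcons : ∀ s, t₀ ≤ s → (∑ i, x s i) = ∑ i, x₀ i := by
    intro s hs
    have hcol : ∀ j, (∑ i, L i j) = 0 := by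
      intro j
      have h := congrFun hLT1 j
      simpa [Matrix.mulVec, dotProduct, Matrix.transpose_apply] using h
    have key := constant_of_has_deriv_right_zero
      (f := fun τ => ∑ i, x τ i) (a := t₀) (b := s)
      (fun τ hτ => ((HasDerivAt.fun_sum
        (fun i (_ : i ∈ Finset.univ) => hasDerivAt_pi.1 (hode τ hτ.1) i)).continuousAt).continuousWithinAt)
      ?_ s (Set.right_mem_Icc.2 hs)
    · have key2 : (∑ i, x s i) = ∑ i, x t₀ i := key
      rw [key2, hx0]
    · intro τ hτ
      have hx' := hode τ hτ.1
      have hsum : HasDerivAt (fun τ' => ∑ i, x τ' i)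
          (∑ i, (maskedConsensusRHS L φ σ δ γ τ (x τ)) i) τ :=
        HasDerivAt.fun_sum (fun i _ => hasDerivAt_pi.1 hx' i)
      have hzero : (∑ i, (maskedConsensusRHS L φ σ δ γ τ (x τ)) i) = 0 := by
        simp only [maskedConsensusRHS, Pi.neg_apply, Matrix.mulVec, dotProduct]
        rw [Finset.sum_neg_distrib, neg_eq_zero, Finset.sum_comm]
        apply Finset.sum_eq_zero
        intro j _
        rw [← Finset.sum_mul, hcol j, zero_mul]
      rw [hzero] at hsum
      exact hsum.hasDerivWithinAt
  have hesum : ∀ s, t₀ ≤ s → (∑ i, (x s i - η)) = 0 := by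
    intro s hs
    rw [Finset.sum_sub_distrib, hcons s hs, Finset.sum_const, Finset.card_univ,
      Fintype.card_fin, nsmul_eq_mul, hnη, sub_self]
  set V : ℝ → ℝ := fun s => ∑ i, (x s i - η)^2 with hV
  set V' : ℝ → ℝ := fun s => ∑ i, 2 * (x s i - η) * (maskedConsensusRHS L φ σ δ γ s (x s)) i
    with hV'
  clear_value V V'
  have hVnn : ∀ s, 0 ≤ V s := by
    intro s
    rw [hV]
    exact Finset.sum_nonneg fun i _ => sq_nonneg _
  have hVd : ∀ s, t₀ ≤ s → HasDerivAt V (V' s) s := by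
    intro s hs
    have hx' := hode s hs
    have h1 : ∀ i : Fin n, HasDerivAt (fun τ => (x τ i - η)^2)
        (2 * (x s i - η) * (maskedConsensusRHS L φ σ δ γ s (x s)) i) s := by
      intro i
      have h2 := (hasDerivAt_pi.1 hx' i).sub_const η
      have h3 := h2.fun_pow 2
      norm_num at h3
      convert h3 using 1
    simp only [hV, hV']
    exact HasDerivAt.fun_sum (fun i _ => h1 i)
  -- key differential inequality
  have hkey : ∀ s, t₀ ≤ s →
      V' s ≤ -lam * V s + Real.exp (-μ * (s - t₀)) * (c₁ * V s + c₂) := by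
    intro s hs
    have hsge0 : (0:ℝ) ≤ s := le_trans ht₀ hs
    set e : Fin n → ℝ := fun i => x s i - η with he
    set v : Fin n → ℝ := fun j =>
      (1 + φ j * Real.exp (-σ j * s)) * (x s j + Real.exp (-δ j * s) * γ j) with hv
    set m : Fin n → ℝ := fun j =>
      φ j * Real.exp (-σ j * s) * (x s j + Real.exp (-δ j * s) * γ j)
        + Real.exp (-δ j * s) * γ j with hm
    have hconst : L.mulVec (fun _ => η) = 0 := by
      have h0 : (fun _ : Fin n => η) = η • (fun _ : Fin n => (1:ℝ)) := by
        funext j; simp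
      rw [h0, Matrix.mulVec_smul, hL1, smul_zero]
    have hLv : L.mulVec v = L.mulVec e + L.mulVec m := by
      have hvd : v = e + ((fun _ => η) + m) := by
        funext j
        simp only [hv, he, hm, Pi.add_apply]
        ring
      rw [hvd, Matrix.mulVec_add, Matrix.mulVec_add, hconst, zero_add]
    have hV's : V' s = -(2 * dotProduct e (L.mulVec e))
        - 2 * dotProduct e (L.mulVec m) := by
      have h1 : V' s = ∑ i, 2 * e i * (-(L.mulVec v)) i := by
        simp only [hV', maskedConsensusRHS, he, hv]
      rw [h1]
      calc (∑ i, 2 * e i * (-(L.mulVec v)) i)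
          = ∑ i, (-(2 * (e i * (L.mulVec e) i)) - 2 * (e i * (L.mulVec m) i)) := by
            apply Finset.sum_congr rfl
            intro i _
            have h2 := congrFun hLv i
            simp only [Pi.neg_apply, Pi.add_apply] at h2 ⊢
            rw [h2]; ring
        _ = -(2 * dotProduct e (L.mulVec e)) - 2 * dotProduct e (L.mulVec m) := by
            rw [Finset.sum_sub_distrib, Finset.sum_neg_distrib, ← Finset.mul_sum,
              ← Finset.mul_sum]
            rfl
    have hsym : 2 * dotProduct e (L.mulVec e)
        = dotProduct e ((L + L.transpose).mulVec e) := by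
      rw [Matrix.add_mulVec, dotProduct_add]
      have h2 : dotProduct e (L.transpose.mulVec e)
          = dotProduct e (L.mulVec e) := by
        rw [Matrix.mulVec_transpose, dotProduct_comm, ← dotProduct_mulVec]
      rw [h2]; ring
    have hsum0 : (∑ i, e i) = 0 := by
      simp only [he]
      exact hesum s hs
    have hspec' : lam * V s ≤ dotProduct e ((L + L.transpose).mulVec e) := by
      have h := hspec e hsum0
      simpa only [he, hV] using h
    set E : ℝ := Real.sqrt (V s) with hE
    have hEnn : 0 ≤ E := Real.sqrt_nonneg _
    have hE2 : E^2 = V s := Real.sq_sqrt (hVnn s)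
    have hEi : ∀ i, |e i| ≤ E := by
      intro i
      have h1 : (e i)^2 ≤ V s := by
        simp only [he, hV]
        exact Finset.single_le_sum (f := fun j => (x s j - η)^2)
          (fun j _ => sq_nonneg _) (Finset.mem_univ i)
      calc |e i| = Real.sqrt ((e i)^2) := (Real.sqrt_sq_eq_abs _).symm
        _ ≤ E := Real.sqrt_le_sqrt h1
    have hxb : ∀ j, |x s j| ≤ E + R := by
      intro j
      have h0 : x s j = e j + η := by simp [he]
      rw [h0]
      calc |e j + η| ≤ |e j| + |η| := abs_add_le _ _
        _ ≤ E + R := add_le_add (hEi j) hηR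
    set qq : ℝ := Real.exp (-μ * (s - t₀)) with hqq
    have hqpos : 0 < qq := Real.exp_pos _
    have hexpσ : ∀ j, Real.exp (-σ j * s) ≤ qq := by
      intro j
      rw [hqq]
      apply Real.exp_le_exp.2
      have h2 : μ * s ≤ σ j * s := mul_le_mul_of_nonneg_right (hμσ j) hsge0
      have h3 : 0 ≤ μ * t₀ := mul_nonneg hμpos.le ht₀
      linarith [h2, h3]
    have hexpδ : ∀ j, Real.exp (-δ j * s) ≤ qq := by
      intro j
      rw [hqq]
      apply Real.exp_le_exp.2
      have h2 : μ * s ≤ δ j * s := mul_le_mul_of_nonneg_right (hμδ j) hsge0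
      have h3 : 0 ≤ μ * t₀ := mul_nonneg hμpos.le ht₀
      linarith [h2, h3]
    have hexpδ1 : ∀ j, Real.exp (-δ j * s) ≤ 1 := by
      intro j
      apply Real.exp_le_one_iff.2
      have h2 : 0 ≤ δ j * s := mul_nonneg (hδ j).le hsge0
      linarith
    set Mm : ℝ := qq * (Φm * (E + R + Γ) + Γ) with hMm
    have hERΓ : 0 ≤ E + R + Γ := by linarith
    have hMmnn : 0 ≤ Mm := by
      rw [hMm]
      apply mul_nonneg hqpos.le
      have h2 : 0 ≤ Φm * (E + R + Γ) := mul_nonneg hΦmpos.le hERΓ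
      linarith
    have hmb : ∀ j, |m j| ≤ Mm := by
      intro j
      have h1 : |x s j + Real.exp (-δ j * s) * γ j| ≤ E + R + Γ := by
        calc |x s j + Real.exp (-δ j * s) * γ j|
            ≤ |x s j| + |Real.exp (-δ j * s) * γ j| := abs_add_le _ _
          _ ≤ (E + R) + Γ := by
              apply add_le_add (hxb j)
              rw [abs_mul, Real.abs_exp]
              calc Real.exp (-δ j * s) * |γ j| ≤ 1 * Γ :=
                    mul_le_mul (hexpδ1 j) (hΓb j) (abs_nonneg _) zero_le_one
                _ = Γ := one_mul Γ
          _ = E + R + Γ := by ring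
      have h2 : |φ j * Real.exp (-σ j * s) * (x s j + Real.exp (-δ j * s) * γ j)|
          ≤ Φm * qq * (E + R + Γ) := by
        rw [abs_mul, abs_mul, Real.abs_exp, abs_of_pos (hφ j)]
        have h3 : φ j * Real.exp (-σ j * s) ≤ Φm * qq :=
          mul_le_mul (hΦmb j) (hexpσ j) (Real.exp_pos _).le hΦmpos.le
        exact mul_le_mul h3 h1 (abs_nonneg _) (by positivity)
      have h4 : |Real.exp (-δ j * s) * γ j| ≤ qq * Γ := by
        rw [abs_mul, Real.abs_exp]
        exact mul_le_mul (hexpδ j) (hΓb j) (abs_nonneg _) hqpos.le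
      calc |m j| ≤ |φ j * Real.exp (-σ j * s) * (x s j + Real.exp (-δ j * s) * γ j)|
            + |Real.exp (-δ j * s) * γ j| := abs_add_le _ _
        _ ≤ Φm * qq * (E + R + Γ) + qq * Γ := add_le_add h2 h4
        _ = Mm := by rw [hMm]; ring
    have hcross := cross_bound L hMLb e m hEi hmb hMLpos.le hEnn
    have h2E : 2*E ≤ V s + 1 := by
      have h := sq_nonneg (E - 1)
      have h2 : (E-1)^2 = E^2 - 2*E + 1 := by ring
      rw [h2, hE2] at h
      linarith
    have harith : 2 * ((n:ℝ)^2 * ML * E * Mm) ≤ qq * (c₁ * V s + c₂) := by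
      have step1 : 2 * ((n:ℝ)^2 * ML * E * Mm)
          = qq * (2*(n:ℝ)^2*ML*Φm*E^2) + qq * (2*c₂*E) := by
        rw [hMm, hc₂]; ring
      have step2 : qq * (2*c₂*E) ≤ qq * (c₂ * (V s + 1)) := by
        apply mul_le_mul_of_nonneg_left _ hqpos.le
        calc 2*c₂*E = c₂ * (2*E) := by ring
          _ ≤ c₂ * (V s + 1) := mul_le_mul_of_nonneg_left h2E hc₂pos.le
      have step3 : qq * (2*(n:ℝ)^2*ML*Φm*E^2) + qq * (c₂ * (V s + 1))
          = qq * (c₁ * V s + c₂) := by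
        rw [hE2, hc₁]; ring
      linarith
    have habs : -(2 * dotProduct e (L.mulVec m))
        ≤ 2 * |dotProduct e (L.mulVec m)| := by
      linarith [neg_abs_le (dotProduct e (L.mulVec m))]
    have hfinal : -lam * V s = -(lam * V s) := by ring
    calc V' s = -(2 * dotProduct e (L.mulVec e))
          - 2 * dotProduct e (L.mulVec m) := hV's
      _ = -(dotProduct e ((L + L.transpose).mulVec e))
          - 2 * dotProduct e (L.mulVec m) := by rw [hsym]
      _ ≤ -(lam * V s) + 2 * |dotProduct e (L.mulVec m)| := by linarith
      _ ≤ -(lam * V s) + 2 * ((n:ℝ)^2 * ML * E * Mm) := by linarith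
      _ ≤ -lam * V s + qq * (c₁ * V s + c₂) := by rw [hfinal]; linarith
  -- phase 1
  set t₁ : ℝ := t₀ + T₁ with ht₁
  have ht₀t₁ : t₀ ≤ t₁ := by rw [ht₁]; linarith
  have ht₁t : t₁ ≤ t := by rw [ht₁]; linarith
  clear_value t₁
  have hph1 : ∀ s ∈ Set.Icc t₀ t₁, V' s ≤ c₁ * V s + c₂ := by
    intro s hsI
    have h := hkey s hsI.1
    have hq1 : Real.exp (-μ * (s - t₀)) ≤ 1 := by
      apply Real.exp_le_one_iff.2
      have h3 : 0 ≤ μ * (s - t₀) := mul_nonneg hμpos.le (by linarith [hsI.1])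
      linarith
    have hcV : 0 ≤ c₁ * V s + c₂ :=
      add_nonneg (mul_nonneg hc₁pos.le (hVnn s)) hc₂pos.le
    have h2 : Real.exp (-μ * (s - t₀)) * (c₁ * V s + c₂) ≤ c₁ * V s + c₂ := by
      have h3 : 0 ≤ (1 - Real.exp (-μ * (s - t₀))) * (c₁ * V s + c₂) :=
        mul_nonneg (by linarith) hcV
      nlinarith [h3]
    linarith [mul_nonneg hlam.le (hVnn s), h, h2]
  have hVt₁ : V t₁ ≤ V1m := by
    have hcmp := cmp_lemma (ne_of_gt hc₁pos) ht₀t₁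
      (fun s hsI => hVd s hsI.1) hph1
    have hV0 : V t₀ ≤ 4*(n:ℝ)*R^2 := by
      have hterm : ∀ i : Fin n, (x t₀ i - η)^2 ≤ 4*R^2 := by
        intro i
        rw [hx0]
        exact sq_sub_le (hx₀R i) hηR
      calc V t₀ = ∑ i, (x t₀ i - η)^2 := by simp only [hV]
        _ ≤ ∑ _i : Fin n, 4*R^2 := Finset.sum_le_sum (fun i _ => hterm i)
        _ = 4*(n:ℝ)*R^2 := by
            rw [Finset.sum_const, Finset.card_univ, Fintype.card_fin, nsmul_eq_mul]; ring
    have hexpeq : t₁ - t₀ = T₁ := by rw [ht₁]; ring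
    rw [hexpeq] at hcmp
    have hmono2 : (V t₀ + c₂/c₁) * Real.exp (c₁ * T₁) - c₂/c₁ ≤ V1m := by
      rw [hV1m]
      have h1 : V t₀ + c₂/c₁ ≤ 4*(n:ℝ)*R^2 + c₂/c₁ := by linarith
      have h2 : (0:ℝ) < Real.exp (c₁*T₁) := Real.exp_pos _
      have h3 : (0:ℝ) ≤ c₂/c₁ := by positivity
      have h4 := mul_le_mul_of_nonneg_right h1 h2.le
      linarith
    linarith
  -- phase 2
  set ε₁ : ℝ := c₂ * Real.exp (-μ * T₁) with hε₁
  have hε₁pos : 0 < ε₁ := by rw [hε₁]; exact mul_pos hc₂pos (Real.exp_pos _)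
  clear_value ε₁
  have hph2 : ∀ s ∈ Set.Icc t₁ t, V' s ≤ (-(lam/2)) * V s + ε₁ := by
    intro s hsI
    have hst₀ : t₀ ≤ s := le_trans ht₀t₁ hsI.1
    have h := hkey s hst₀
    have hqm : Real.exp (-μ * (s - t₀)) ≤ Real.exp (-μ * T₁) := by
      apply Real.exp_le_exp.2
      have h5 : T₁ ≤ s - t₀ := by
        have := hsI.1
        rw [ht₁] at this
        linarith
      have h6 := mul_le_mul_of_nonneg_left h5 hμpos.le
      linarith
    have hVs := hVnn s
    have h1 : Real.exp (-μ * (s - t₀)) * (c₁ * V s) ≤ (lam/2) * V s := by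
      have hA1 := mul_le_mul_of_nonneg_right hqm (mul_nonneg hc₁pos.le hVs)
      have hA2 := mul_le_mul_of_nonneg_right hA hVs
      nlinarith [hA1, hA2]
    have h2 : Real.exp (-μ * (s - t₀)) * c₂ ≤ ε₁ := by
      rw [hε₁]
      have h7 := mul_le_mul_of_nonneg_right hqm hc₂pos.le
      linarith
    have hdist : Real.exp (-μ * (s - t₀)) * (c₁ * V s + c₂)
        = Real.exp (-μ * (s - t₀)) * (c₁ * V s) + Real.exp (-μ * (s - t₀)) * c₂ := by ring
    rw [hdist] at h
    linarith [h, h1, h2]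
  have hKne : (-(lam/2)) ≠ 0 := by
    intro h
    have : lam = 0 := by linarith [neg_eq_zero.1 h]
    linarith
  have hcmp2 := cmp_lemma (K := -(lam/2)) (eps := ε₁) hKne ht₁t
    (fun s hsI => hVd s (le_trans ht₀t₁ hsI.1)) hph2
  set d : ℝ := 2*ε₁/lam with hd
  have hdpos : 0 < d := by rw [hd]; positivity
  clear_value d
  have hdiv : ε₁ / (-(lam/2)) = -d := by
    rw [hd, div_neg, div_div_eq_mul_div]
    ring
  rw [hdiv] at hcmp2
  have hdle : d ≤ ν^2/4 := by
    rw [hd, hε₁]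
    calc 2*(c₂*Real.exp (-μ*T₁))/lam = 2*c₂/lam * Real.exp (-μ*T₁) := by ring
      _ ≤ ν^2/4 := hBc
  have hexp2 : Real.exp (-(lam/2)*(t-t₁)) ≤ Real.exp (-(lam/2)*T₂) := by
    apply Real.exp_le_exp.2
    have hT₂t : T₂ ≤ t - t₁ := by rw [ht₁]; linarith
    have h8 := mul_le_mul_of_nonneg_left hT₂t (show (0:ℝ) ≤ lam/2 by linarith)
    linarith
  have hVt : V t ≤ ν^2/2 := by
    have hterm : (V t₁ + -d) * Real.exp (-(lam/2)*(t-t₁)) ≤ V1m * Real.exp (-(lam/2)*T₂) := by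
      rcases le_or_gt (V t₁ + -d) 0 with hneg | hpos
      · have h1 : (V t₁ + -d) * Real.exp (-(lam/2)*(t-t₁)) ≤ 0 :=
          mul_nonpos_of_nonpos_of_nonneg hneg (Real.exp_pos _).le
        have h2 : (0:ℝ) ≤ V1m * Real.exp (-(lam/2)*T₂) := by positivity
        linarith
      · calc (V t₁ + -d) * Real.exp (-(lam/2)*(t-t₁))
            ≤ V1m * Real.exp (-(lam/2)*(t-t₁)) := by
              apply mul_le_mul_of_nonneg_right _ (Real.exp_pos _).le
              linarith
          _ ≤ V1m * Real.exp (-(lam/2)*T₂) :=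
              mul_le_mul_of_nonneg_left hexp2 hV1mpos.le
    have hVexp : V1m * Real.exp (-(lam/2)*T₂) ≤ ν^2/4 := hT₂' T₂ le_rfl
    linarith
  have hVlt : V t < ν^2 := by
    have h9 : (0:ℝ) < ν^2 := by positivity
    linarith
  have hgoal : ∀ i, |x t i - η| < ν := by
    intro i
    have h1 : (x t i - η)^2 ≤ V t := by
      rw [hV]
      exact Finset.single_le_sum (f := fun j => (x t j - η)^2)
        (fun j _ => sq_nonneg _) (Finset.mem_univ i)
    have h2 : (x t i - η)^2 < ν^2 := lt_of_le_of_lt h1 hVlt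
    exact abs_lt_of_sq_lt h2 hν
  apply (pi_norm_lt_iff hν).2
  intro i
  simp only [Pi.sub_apply, Real.norm_eq_abs]
  exact hgoal i
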